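/- Let D ≥ 1 and let H̃ : ([0,1]^d)^T → ℝ be given by H̃(X) = F̃₀(min_{t∈S_1} f̃_1(x(t)), …, min_{t∈S_D} f̃_D(x(t))), where each S_i ⊆ {1,…,T} has |S_i| ≥ T/4, each f̃_i : [0,1]^d → [0,1] is merely continuous, and F̃₀ : [0,1]^D → ℝ is continuous. Then for every ε > 0 there exists H ∈ F_D^{d,T}, using the same subsets S_1,…,S_D, such that max over X ∈ ([0,1]^d)^T of |H(X) − H̃(X)| ≤ ε. Consequently the closures in the uniform norm of the restricted class and of this relaxed class coincide. -/

import Mathlib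

open Set

/-- The cube `[0,1]^n` inside `Fin n → ℝ`. -/
def cube (n : ℕ) : Set (Fin n → ℝ) := {x | ∀ i, x i ∈ Icc (0 : ℝ) 1}

/-- The input space `([0,1]^d)^T` of sequences of length `T` of points in `[0,1]^d`. -/
def seqCube (d T : ℕ) : Set (Fin T → Fin d → ℝ) := {X | ∀ t, X t ∈ cube d}

lemma cube_eq_pi (n : ℕ) : cube n = Set.pi univ (fun _ => Icc (0:ℝ) 1) := by
  ext x; simp [cube, Set.pi]

lemma isCompact_cube (n : ℕ) : IsCompact (cube n) := by
  rw [cube_eq_pi]; exact isCompact_univ_pi (fun _ => isCompact_Icc)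

lemma convex_cube (n : ℕ) : Convex ℝ (cube n) := by
  rw [cube_eq_pi]; exact convex_pi (fun _ _ => convex_Icc 0 1)

lemma cube_nonempty (n : ℕ) : (cube n).Nonempty :=
  ⟨fun _ => 0, fun _ => ⟨le_refl _, zero_le_one⟩⟩

lemma uniqueDiffOn_cube (n : ℕ) : UniqueDiffOn ℝ (cube n) := by
  apply uniqueDiffOn_convex (convex_cube n)
  refine ⟨fun _ => 1/2, ?_⟩
  rw [cube_eq_pi, interior_pi_set finite_univ]
  intro i _
  simp [interior_Icc]
  norm_num

lemma smooth_approx (n : ℕ) (g : (Fin n → ℝ) → ℝ) (hg : ContinuousOn g (cube n))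
    {δ : ℝ} (hδ : 0 < δ) :
    ∃ P : (Fin n → ℝ) → ℝ, ContDiff ℝ ⊤ P ∧ ∀ x ∈ cube n, |P x - g x| ≤ δ := by
  haveI : CompactSpace (cube n) := isCompact_iff_compactSpace.mp (isCompact_cube n)
  set A : Subalgebra ℝ C((cube n : Set (Fin n → ℝ)), ℝ) :=
    Algebra.adjoin ℝ (Set.range fun j : Fin n =>
      (⟨fun x => (x : Fin n → ℝ) j, by exact (continuous_apply _).comp continuous_subtype_val⟩ : C((cube n : Set (Fin n → ℝ)), ℝ))) with hA
  have hsep : A.SeparatesPoints := by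
    intro x y hxy
    have : (x : Fin n → ℝ) ≠ (y : Fin n → ℝ) := fun h => hxy (Subtype.ext h)
    obtain ⟨j, hj⟩ := Function.ne_iff.mp this
    refine ⟨_, ⟨(⟨fun x => (x : Fin n → ℝ) j, by exact (continuous_apply _).comp continuous_subtype_val⟩ :
      C((cube n : Set (Fin n → ℝ)), ℝ)), ?_, rfl⟩, hj⟩
    exact Algebra.subset_adjoin ⟨j, rfl⟩
  obtain ⟨p, hp⟩ := ContinuousMap.exists_mem_subalgebra_near_continuous_of_separatesPoints
    A hsep (fun x => g x) (hg.restrict) δ hδ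
  -- every element of A extends to a smooth function
  have key : ∀ (q : C((cube n : Set (Fin n → ℝ)), ℝ)), q ∈ A →
      ∃ P : (Fin n → ℝ) → ℝ, ContDiff ℝ ⊤ P ∧ ∀ x : (cube n : Set (Fin n → ℝ)), P x = q x := by
    intro q hq
    induction hq using Algebra.adjoin_induction with
    | mem q hq =>
      obtain ⟨j, rfl⟩ := hq
      exact ⟨fun x => x j, (ContinuousLinearMap.proj j : (Fin n → ℝ) →L[ℝ] ℝ).contDiff,
        fun x => rfl⟩
    | algebraMap r => exact ⟨fun _ => r, contDiff_const, fun x => rfl⟩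
    | add q₁ q₂ h₁ h₂ ih₁ ih₂ =>
      obtain ⟨P₁, hP₁, e₁⟩ := ih₁; obtain ⟨P₂, hP₂, e₂⟩ := ih₂
      exact ⟨P₁ + P₂, hP₁.add hP₂, fun x => by simp [e₁ x, e₂ x]⟩
    | mul q₁ q₂ h₁ h₂ ih₁ ih₂ =>
      obtain ⟨P₁, hP₁, e₁⟩ := ih₁; obtain ⟨P₂, hP₂, e₂⟩ := ih₂
      exact ⟨P₁ * P₂, hP₁.mul hP₂, fun x => by simp [e₁ x, e₂ x]⟩
  obtain ⟨P, hP, hPe⟩ := key p p.2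
  refine ⟨P, hP, fun x hx => ?_⟩
  have := hp ⟨x, hx⟩
  rw [Real.norm_eq_abs] at this
  have e := hPe ⟨x, hx⟩
  simp only [Set.restrict_apply] at this ⊢
  rw [e]
  exact le_of_lt this

lemma exists_injective_choice {α : Type*} : ∀ (n : ℕ) (G : Fin n → Set α),
    (∀ i, (G i).Infinite) → ∃ a : Fin n → α, Function.Injective a ∧ ∀ i, a i ∈ G i := by
  intro n
  induction n with
  | zero => exact fun G _ => ⟨fun i => i.elim0, fun i => i.elim0, fun i => i.elim0⟩
  | succ m ih =>
    intro G hG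
    obtain ⟨a, ha, hmem⟩ := ih (fun i => G i.castSucc) (fun i => hG _)
    have : ((G (Fin.last m)) \ (Set.range a)).Nonempty :=
      ((hG (Fin.last m)).diff (Set.finite_range a)).nonempty
    obtain ⟨b, hb, hbr⟩ := this
    refine ⟨Fin.snoc a b, ?_, ?_⟩
    · intro i j hij
      rcases Fin.eq_castSucc_or_eq_last i with ⟨i', rfl⟩ | rfl <;>
        rcases Fin.eq_castSucc_or_eq_last j with ⟨j', rfl⟩ | rfl
      · simp only [Fin.snoc_castSucc] at hij
        exact congrArg Fin.castSucc (ha hij)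
      · simp only [Fin.snoc_castSucc, Fin.snoc_last] at hij
        exact absurd ⟨i', hij⟩ hbr
      · simp only [Fin.snoc_castSucc, Fin.snoc_last] at hij
        exact absurd ⟨j', hij.symm⟩ hbr
      · rfl
    · intro i
      rcases Fin.eq_castSucc_or_eq_last i with ⟨i', rfl⟩ | rfl
      · simpa using hmem i'
      · simpa using hb

lemma inf'_abs_le {β : Type*} (s : Finset β) (hs : s.Nonempty) (g h : β → ℝ) {c : ℝ}
    (hc : ∀ t ∈ s, |g t - h t| ≤ c) :
    |s.inf' hs g - s.inf' hs h| ≤ c := by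
  rw [abs_sub_le_iff]
  constructor
  · obtain ⟨t₀, ht₀, he⟩ := s.exists_mem_eq_inf' hs h
    calc s.inf' hs g - s.inf' hs h ≤ g t₀ - h t₀ := by
          rw [he]; exact sub_le_sub_right (Finset.inf'_le _ ht₀) _
      _ ≤ c := (abs_le.mp (hc t₀ ht₀)).2.trans_eq' rfl
  · obtain ⟨t₀, ht₀, he⟩ := s.exists_mem_eq_inf' hs g
    calc s.inf' hs h - s.inf' hs g ≤ h t₀ - g t₀ := by
          rw [he]; exact sub_le_sub_right (Finset.inf'_le _ ht₀) _
      _ ≤ c := by have := (abs_le.mp (hc t₀ ht₀)).1; linarith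

noncomputable section

def quadr (n : ℕ) (a : Fin n → ℝ) (x : Fin n → ℝ) : ℝ := ∑ j, (x j - a j)^2

lemma contDiff_quadr (n : ℕ) (a : Fin n → ℝ) : ContDiff ℝ ⊤ (quadr n a) := by
  apply ContDiff.sum
  intro j _
  exact (((ContinuousLinearMap.proj j : (Fin n → ℝ) →L[ℝ] ℝ).contDiff).sub contDiff_const).pow 2

lemma quadr_nonneg (n : ℕ) (a x : Fin n → ℝ) : 0 ≤ quadr n a x :=
  Finset.sum_nonneg fun j _ => sq_nonneg _

lemma quadr_eq_zero (n : ℕ) (a x : Fin n → ℝ) (h : quadr n a x = 0) : x = a := by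
  have := (Finset.sum_eq_zero_iff_of_nonneg (fun j _ => sq_nonneg (x j - a j))).mp h
  funext j
  have := this j (Finset.mem_univ j)
  have := pow_eq_zero_iff (n := 2) (by norm_num) |>.mp this
  linarith

lemma quadr_le (n : ℕ) {a x : Fin n → ℝ} (ha : a ∈ cube n) (hx : x ∈ cube n) :
    quadr n a x ≤ n := by
  calc quadr n a x ≤ ∑ _j : Fin n, (1:ℝ) := by
        apply Finset.sum_le_sum
        intro j _
        have h1 := ha j; have h2 := hx j
        simp only [mem_Icc] at h1 h2
        nlinarith [h1.1, h1.2, h2.1, h2.2]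
    _ = n := by simp

lemma dist_lt_of_quadr_lt {n : ℕ} {a x : Fin n → ℝ} {ρ : ℝ} (hρ : 0 < ρ)
    (h : quadr n a x < ρ^2) : dist x a < ρ := by
  rw [dist_pi_lt_iff hρ]
  intro j
  have h1 : (x j - a j)^2 < ρ^2 :=
    lt_of_le_of_lt (Finset.single_le_sum (f := fun j => (x j - a j)^2)
      (fun j _ => sq_nonneg _) (Finset.mem_univ j)) h
  have h2 : |x j - a j| < ρ := abs_lt_of_sq_lt_sq h1 hρ.le
  rwa [Real.dist_eq]

def bil (n : ℕ) (θ : ℝ) : (Fin n → ℝ) →L[ℝ] (Fin n → ℝ) →L[ℝ] ℝ :=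
  ∑ j : Fin n, (2*θ) • ((ContinuousLinearMap.proj j : (Fin n → ℝ) →L[ℝ] ℝ).smulRight
    (ContinuousLinearMap.proj j : (Fin n → ℝ) →L[ℝ] ℝ))

lemma bil_apply (n : ℕ) (θ : ℝ) (u v : Fin n → ℝ) :
    bil n θ u v = ∑ j, 2*θ * (u j * v j) := by
  simp [bil, ContinuousLinearMap.sum_apply, mul_assoc]

lemma hasFDerivAt_quadr (n : ℕ) (a : Fin n → ℝ) (c θ : ℝ) (x : Fin n → ℝ) :
    HasFDerivAt (fun y => c + θ * quadr n a y) (bil n θ x - bil n θ a) x := by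
  have h : ∀ j : Fin n, HasFDerivAt (fun y : Fin n → ℝ => (y j - a j)^2)
      ((2 * (x j - a j)) • (ContinuousLinearMap.proj j : (Fin n → ℝ) →L[ℝ] ℝ)) x := by
    intro j
    have hp : HasFDerivAt (fun y : Fin n → ℝ => y j - a j)
        (ContinuousLinearMap.proj j : (Fin n → ℝ) →L[ℝ] ℝ) x :=
      by simpa using ((ContinuousLinearMap.proj j : (Fin n → ℝ) →L[ℝ] ℝ).hasFDerivAt
        (x := x)).sub_const (a j)
    have := hp.mul hp
    have e1 : (fun y : Fin n → ℝ => (y j - a j)^2)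
        = ((fun y => y j - a j) * fun y => y j - a j) := by funext y; simp [sq]
    have e2 : (2 * (x j - a j)) • (ContinuousLinearMap.proj j : (Fin n → ℝ) →L[ℝ] ℝ)
        = (x j - a j) • ContinuousLinearMap.proj j + (x j - a j) • ContinuousLinearMap.proj j := by
      rw [two_mul, add_smul]
    rw [e1, e2]; exact this
  have hsum : HasFDerivAt (quadr n a)
      (∑ j, (2 * (x j - a j)) • (ContinuousLinearMap.proj j : (Fin n → ℝ) →L[ℝ] ℝ)) x :=
    HasFDerivAt.fun_sum (fun j _ => h j)
  have := (hsum.const_mul θ).const_add c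
  refine this.congr_fderiv ?_
  ext v
  simp only [ContinuousLinearMap.sub_apply, bil_apply, ContinuousLinearMap.smul_apply,
    ContinuousLinearMap.sum_apply, ContinuousLinearMap.proj_apply, smul_eq_mul]
  rw [← Finset.sum_sub_distrib, Finset.mul_sum]
  apply Finset.sum_congr rfl
  intro j _
  ring

lemma second_deriv_quadr (n : ℕ) (a : Fin n → ℝ) (c θ : ℝ) (v : Fin n → ℝ) :
    iteratedFDeriv ℝ 2 (fun y => c + θ * quadr n a y) a ![v, v] = ∑ j, 2*θ*(v j * v j) := by
  rw [iteratedFDeriv_two_apply]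
  have e1 : (fderiv ℝ (fun y => c + θ * quadr n a y)) = fun x => bil n θ x - bil n θ a := by
    funext x
    exact (hasFDerivAt_quadr n a c θ x).fderiv
  rw [e1]
  have e2 : HasFDerivAt (fun x => bil n θ x - bil n θ a) (bil n θ) a :=
    (bil n θ).hasFDerivAt.sub_const _
  rw [e2.fderiv]
  simp [bil_apply]

lemma iteratedFDerivWithin_cube_eq {n : ℕ} {f : (Fin n → ℝ) → ℝ} (hf : ContDiff ℝ 2 f)
    {x : Fin n → ℝ} (hx : x ∈ cube n) :
    iteratedFDerivWithin ℝ 2 f (cube n) x = iteratedFDeriv ℝ 2 f x := by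
  have h1 : HasFTaylorSeriesUpToOn 2 f (ftaylorSeries ℝ f) (cube n) := by
    have := (contDiff_iff_ftaylorSeries (𝕜 := ℝ) (n := (2:ℕ∞))).mp hf
    rw [← hasFTaylorSeriesUpToOn_univ_iff] at this
    exact this.mono (subset_univ _)
  exact (h1.eq_iteratedFDerivWithin_of_uniqueDiffOn le_rfl (uniqueDiffOn_cube n) hx).symm

lemma squash_approx (n : ℕ) (g : (Fin n → ℝ) → ℝ) (hg : ContinuousOn g (cube n))
    (hg01 : ∀ x ∈ cube n, g x ∈ Icc (0:ℝ) 1) {δ : ℝ} (hδ : 0 < δ) (hδ1 : δ ≤ 1) :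
    ∃ q : (Fin n → ℝ) → ℝ, ContDiff ℝ ⊤ q ∧ (∀ x ∈ cube n, q x ∈ Icc (0:ℝ) (1-δ)) ∧
      (∀ x ∈ cube n, |q x - g x| ≤ 8*δ) := by
  obtain ⟨p, hp, hpa⟩ := smooth_approx n g hg hδ
  refine ⟨fun x => (1-δ) * (p x + δ) / (1+2*δ), ?_, ?_, ?_⟩
  · exact ((contDiff_const.mul (hp.add contDiff_const)).div_const _)
  · intro x hx
    have h1 := hpa x hx
    have h2 := hg01 x hx
    simp only [mem_Icc] at h2 ⊢
    rw [abs_le] at h1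
    constructor
    · apply div_nonneg _ (by linarith)
      nlinarith
    · rw [div_le_iff₀ (by linarith : (0:ℝ) < 1+2*δ)]
      nlinarith
  · intro x hx
    have h1 := hpa x hx
    have h2 := hg01 x hx
    simp only [mem_Icc] at h2
    rw [abs_le] at h1 ⊢
    have h3 : (0:ℝ) < 1+2*δ := by linarith
    have key : ((1-δ) * (p x + δ) / (1+2*δ) - g x)*(1+2*δ)
        = (1-δ) * (p x + δ) - g x * (1+2*δ) := by
      field_simp
    constructor
    · nlinarith [h1.1, h1.2, h2.1, h2.2]
    · nlinarith [h1.1, h1.2, h2.1, h2.2]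

lemma quadr_self (n : ℕ) (a : Fin n → ℝ) : quadr n a a = 0 := by simp [quadr]

set_option maxHeartbeats 1000000

/-- relaxed class and closure equivalence: if
`H̃(X) = F̃₀(min_{t∈S₁} f̃₁(x(t)), …, min_{t∈S_D} f̃_D(x(t)))` with each `Sᵢ ⊆ {1,…,T}`
of cardinality `≥ T/4`, each `f̃ᵢ : [0,1]^d → [0,1]` merely continuous, and
`F̃₀ : [0,1]^D → ℝ` continuous, then for each `ε > 0` there is an `H` in the restricted
class `F_D^{d,T}` — using the same subsets `S₁, …, S_D`, with `fᵢ : [0,1]^d → [0,1]` of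
class `C²` having unique, pairwise distinct global minimizers with positive definite
Hessians, and `F₀` of class `C¹` — that is uniformly `ε`-close to `H̃` on `([0,1]^d)^T`. -/
theorem relaxed_class_closure_equivalence (d T D : ℕ) (hd : 1 ≤ d) (hT : 1 ≤ T) (hD : 1 ≤ D)
    (S : Fin D → Finset (Fin T)) (hcard : ∀ i, (T : ℝ) / 4 ≤ ((S i).card : ℝ))
    (hS : ∀ i, (S i).Nonempty)
    (ft : Fin D → (Fin d → ℝ) → ℝ) (hft : ∀ i, ContinuousOn (ft i) (cube d))
    (hft01 : ∀ i, ∀ x ∈ cube d, ft i x ∈ Icc (0 : ℝ) 1)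
    (Ft₀ : (Fin D → ℝ) → ℝ) (hFt₀ : ContinuousOn Ft₀ (cube D))
    (Ht : (Fin T → Fin d → ℝ) → ℝ)
    (hHt : ∀ X ∈ seqCube d T,
      Ht X = Ft₀ (fun i => (S i).inf' (hS i) (fun t => ft i (X t))))
    (ε : ℝ) (hε : 0 < ε) :
    ∃ (f : Fin D → (Fin d → ℝ) → ℝ) (xm : Fin D → (Fin d → ℝ)) (F₀ : (Fin D → ℝ) → ℝ),
      (∀ i, ContDiffOn ℝ 2 (f i) (cube d)) ∧
      (∀ i, ∀ x ∈ cube d, f i x ∈ Icc (0 : ℝ) 1) ∧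
      (∀ i, xm i ∈ cube d) ∧
      (∀ i, ∀ x ∈ cube d, f i (xm i) ≤ f i x) ∧
      (∀ i, ∀ x ∈ cube d, f i x = f i (xm i) → x = xm i) ∧
      Function.Injective xm ∧
      (∀ i, ∀ v : Fin d → ℝ, v ≠ 0 →
        0 < iteratedFDerivWithin ℝ 2 (f i) (cube d) (xm i) ![v, v]) ∧
      ContDiffOn ℝ 1 F₀ (cube D) ∧
      (∀ X ∈ seqCube d T,
        |F₀ (fun i => (S i).inf' (hS i) (fun t => f i (X t))) - Ht X| ≤ ε) := by
  -- uniform continuity of Ft₀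
  obtain ⟨δ₀, hδ₀pos, hδ₀⟩ := (Metric.uniformContinuousOn_iff).mp
    ((isCompact_cube D).uniformContinuousOn_of_continuous hFt₀) (ε/2) (by positivity)
  set δ : ℝ := min (δ₀/12) 1 with hδdef
  have hδpos : 0 < δ := lt_min (by positivity) one_pos
  have hδ1 : δ ≤ 1 := min_le_right _ _
  have hδδ₀ : 11 * δ < δ₀ := by
    have : δ ≤ δ₀/12 := min_le_left _ _
    nlinarith
  have hdpos : (0:ℝ) < d := by exact_mod_cast hd
  set θ : ℝ := δ / d with hθdef
  have hθpos : 0 < θ := div_pos hδpos hdpos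
  have hθd : θ * d = δ := div_mul_cancel₀ δ (ne_of_gt hdpos)
  -- smooth approximations of the ft i
  choose q hqsm hqr hqa using fun i =>
    squash_approx d (ft i) (hft i) (hft01 i) hδpos hδ1
  -- minimizers of q i
  choose astar hastar hmin using fun i =>
    (isCompact_cube d).exists_isMinOn (cube_nonempty d) ((hqsm i).continuous.continuousOn)
  set m : Fin D → ℝ := fun i => q i (astar i) with hmdef
  have hminle : ∀ i, ∀ x ∈ cube d, m i ≤ q i x := fun i x hx => hmin i hx
  -- the sets of near-minimizers are infinite
  have hGinf : ∀ i, {x | x ∈ cube d ∧ q i x < m i + δ}.Infinite := by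
    intro i
    obtain ⟨ρ, hρpos, hρ⟩ := Metric.continuousAt_iff.mp
      ((hqsm i).continuous.continuousAt (x := astar i)) δ hδpos
    set j0 : Fin d := ⟨0, hd⟩
    set c : ℝ := astar i j0 with hcdef
    have hc01 : c ∈ Icc (0:ℝ) 1 := hastar i j0
    have hlo : max 0 (c - ρ) < min 1 (c + ρ) := by
      rcases hc01 with ⟨hc0, hc1⟩
      apply lt_min <;> apply max_lt <;> linarith
    have hinj : Set.InjOn (fun s => Function.update (astar i) j0 s)
        (Ioo (max 0 (c - ρ)) (min 1 (c + ρ))) := by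
      intro s₁ _ s₂ _ h
      have := congrFun h j0
      simpa using this
    have hmaps : ∀ s ∈ Ioo (max 0 (c - ρ)) (min 1 (c + ρ)),
        Function.update (astar i) j0 s ∈ {x | x ∈ cube d ∧ q i x < m i + δ} := by
      intro s hs
      rcases hs with ⟨hs1, hs2⟩
      have hs0 : 0 ≤ s := le_of_lt (lt_of_le_of_lt (le_max_left _ _) hs1)
      have hs1' : s ≤ 1 := le_of_lt (lt_of_lt_of_le hs2 (min_le_left _ _))
      have hscl : c - ρ < s := lt_of_le_of_lt (le_max_right _ _) hs1
      have hscu : s < c + ρ := lt_of_lt_of_le hs2 (min_le_right _ _)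
      have hmem : Function.update (astar i) j0 s ∈ cube d := by
        intro j
        rcases eq_or_ne j j0 with rfl | hj
        · simpa using ⟨hs0, hs1'⟩
        · simp only [Function.update_of_ne hj]
          exact hastar i j
      refine ⟨hmem, ?_⟩
      have hdist : dist (Function.update (astar i) j0 s) (astar i) < ρ := by
        rw [dist_pi_lt_iff hρpos]
        intro j
        rcases eq_or_ne j j0 with rfl | hj
        · simp only [Function.update_self, Real.dist_eq]
          rw [abs_lt]; constructor <;> linarith
        · simp [Function.update_of_ne hj, hρpos]
      have := hρ hdist
      rw [Real.dist_eq] at this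
      have h2 := (abs_lt.mp this).2
      have hm : m i = q i (astar i) := rfl
      linarith
    have himg : ((fun s => Function.update (astar i) j0 s) ''
        (Ioo (max 0 (c - ρ)) (min 1 (c + ρ)))).Infinite :=
      (Set.Ioo_infinite hlo).image hinj
    exact Set.Infinite.mono (Set.image_subset_iff.mpr hmaps) himg
  -- choose pairwise distinct near-minimizers
  obtain ⟨a, hainj, hamem⟩ := exists_injective_choice D _ hGinf
  have hacube : ∀ i, a i ∈ cube d := fun i => (hamem i).1
  have hanear : ∀ i, q i (a i) < m i + δ := fun i => (hamem i).2
  -- continuity moduli at the points a i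
  choose ρ hρpos hρ using fun i =>
    Metric.continuousAt_iff.mp ((hqsm i).continuous.continuousAt (x := a i)) δ hδpos
  -- the functions f i
  set χ : Fin D → (Fin d → ℝ) → ℝ :=
    fun i x => Real.smoothTransition (2 * quadr d (a i) x / (ρ i)^2 - 1) with hχdef
  set f : Fin D → (Fin d → ℝ) → ℝ :=
    fun i x => m i + χ i x * (q i x - m i) + θ * quadr d (a i) x with hfdef
    -- basic facts about f
  have hrle : ∀ i, ∀ x ∈ cube d, θ * quadr d (a i) x ≤ δ := by
    intro i x hx
    calc θ * quadr d (a i) x ≤ θ * d :=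
          mul_le_mul_of_nonneg_left (quadr_le d (hacube i) hx) hθpos.le
      _ = δ := hθd
  have hfa : ∀ i, f i (a i) = m i := by
    intro i
    simp only [hfdef, hχdef, quadr_self]
    rw [Real.smoothTransition.zero_of_nonpos (by rw [mul_zero, zero_div]; norm_num)]
    ring
  have hfge : ∀ i, ∀ x ∈ cube d, m i ≤ f i x := by
    intro i x hx
    have h1 : 0 ≤ χ i x := Real.smoothTransition.nonneg _
    have h2 : m i ≤ q i x := hminle i x hx
    have h3 : 0 ≤ quadr d (a i) x := quadr_nonneg _ _ _
    simp only [hfdef]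
    nlinarith [mul_nonneg h1 (sub_nonneg.mpr h2), mul_nonneg hθpos.le h3]
  have hfmin : ∀ i, ∀ x ∈ cube d, f i (a i) ≤ f i x := by
    intro i x hx
    rw [hfa i]
    exact hfge i x hx
  have hfuniq : ∀ i, ∀ x ∈ cube d, f i x = f i (a i) → x = a i := by
    intro i x hx hfx
    rw [hfa i] at hfx
    have h1 : 0 ≤ χ i x * (q i x - m i) :=
      mul_nonneg (Real.smoothTransition.nonneg _) (sub_nonneg.mpr (hminle i x hx))
    have h3 : 0 ≤ quadr d (a i) x := quadr_nonneg _ _ _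
    have h4 : θ * quadr d (a i) x = 0 := by
      have : m i + χ i x * (q i x - m i) + θ * quadr d (a i) x = m i := hfx
      nlinarith [mul_nonneg hθpos.le h3]
    have h5 : quadr d (a i) x = 0 := by
      rcases mul_eq_zero.mp h4 with h | h
      · exact absurd h (ne_of_gt hθpos)
      · exact h
    exact quadr_eq_zero d (a i) x h5
  have hfsm : ∀ i, ContDiff ℝ 2 (f i) := by
    intro i
    have hq2 : ContDiff ℝ 2 (quadr d (a i)) := (contDiff_quadr d (a i)).of_le le_top
    have hχsm : ContDiff ℝ 2 (χ i) := by
      apply (Real.smoothTransition.contDiff (n := 2)).comp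
      exact ((contDiff_const.mul hq2).div_const _).sub contDiff_const
    exact (contDiff_const.add
      (hχsm.mul (((hqsm i).of_le le_top).sub contDiff_const))).add (contDiff_const.mul hq2)
  have hf01 : ∀ i, ∀ x ∈ cube d, f i x ∈ Icc (0:ℝ) 1 := by
    intro i x hx
    constructor
    · have hm0 : 0 ≤ m i := (hqr i (astar i) (hastar i)).1
      linarith [hfge i x hx]
    · have h1 : χ i x * (q i x - m i) ≤ q i x - m i :=
        mul_le_of_le_one_left (sub_nonneg.mpr (hminle i x hx))
          (Real.smoothTransition.le_one _)
      have h2 := hrle i x hx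
      have h3 : q i x ≤ 1 - δ := (hqr i x hx).2
      simp only [hfdef]
      linarith
  -- f approximates ft within 11δ on the cube
  have hfft : ∀ i, ∀ x ∈ cube d, |f i x - ft i x| ≤ 11*δ := by
    intro i x hx
    have hfq : |f i x - q i x| ≤ 3*δ := by
      have hqm : 0 ≤ q i x - m i := sub_nonneg.mpr (hminle i x hx)
      have hχ1 : χ i x ≤ 1 := Real.smoothTransition.le_one _
      have hχ0 : 0 ≤ χ i x := Real.smoothTransition.nonneg _
      have hth0 : 0 ≤ θ * quadr d (a i) x :=
        mul_nonneg hθpos.le (quadr_nonneg _ _ _)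
      have hth1 := hrle i x hx
      have hkey : f i x - q i x = (χ i x - 1) * (q i x - m i) + θ * quadr d (a i) x := by
        simp only [hfdef]; ring
      by_cases hr : quadr d (a i) x < (ρ i)^2
      · have hdx : dist x (a i) < ρ i := dist_lt_of_quadr_lt (hρpos i) hr
        have := hρ i hdx
        rw [Real.dist_eq] at this
        have h2 : q i x - q i (a i) < δ := (abs_lt.mp this).2
        have h3 : q i x - m i < 2*δ := by
          have := hanear i
          linarith
        rw [abs_le]
        constructor
        · nlinarith [mul_nonneg (sub_nonneg.mpr hχ1) (sub_nonneg.mpr (hminle i x hx))]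
        · nlinarith [mul_nonneg (sub_nonneg.mpr hχ1) (sub_nonneg.mpr (hminle i x hx))]
      · have hρ2 : 0 < (ρ i)^2 := pow_pos (hρpos i) 2
        have hχeq : χ i x = 1 := by
          apply Real.smoothTransition.one_of_one_le
          rw [le_sub_iff_add_le, le_div_iff₀ hρ2]
          nlinarith [not_lt.mp hr]
        rw [hkey, hχeq]
        simp only [sub_self, zero_mul, zero_add]
        rw [abs_of_nonneg hth0]
        linarith
    have := hqa i x hx
    calc |f i x - ft i x| ≤ |f i x - q i x| + |q i x - ft i x| := abs_sub_le _ _ _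
      _ ≤ 3*δ + 8*δ := add_le_add hfq this
      _ = 11*δ := by ring
  -- positive definite Hessian at a i
  have hhess : ∀ i, ∀ v : Fin d → ℝ, v ≠ 0 →
      0 < iteratedFDerivWithin ℝ 2 (f i) (cube d) (a i) ![v, v] := by
    intro i v hv
    set g₂ : (Fin d → ℝ) → ℝ := fun x => m i + θ * quadr d (a i) x with hg₂def
    have hρ2 : 0 < (ρ i)^2 := pow_pos (hρpos i) 2
    have hU : IsOpen {x : Fin d → ℝ | quadr d (a i) x < (ρ i)^2/2} :=
      isOpen_lt (contDiff_quadr d (a i)).continuous continuous_const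
    have haU : a i ∈ {x : Fin d → ℝ | quadr d (a i) x < (ρ i)^2/2} := by
      simp only [mem_setOf_eq, quadr_self]
      positivity
    have heq : ∀ x ∈ {x : Fin d → ℝ | quadr d (a i) x < (ρ i)^2/2}, f i x = g₂ x := by
      intro x hxU
      simp only [mem_setOf_eq] at hxU
      have hχ0 : χ i x = 0 := by
        apply Real.smoothTransition.zero_of_nonpos
        rw [sub_nonpos, div_le_one hρ2]
        linarith
      simp only [hfdef, hg₂def, hχdef] at hχ0 ⊢
      rw [hχ0]
      ring
    have hev : f i =ᶠ[nhdsWithin (a i) (cube d)] g₂ :=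
      Filter.eventuallyEq_of_mem (mem_nhdsWithin_of_mem_nhds (hU.mem_nhds haU)) heq
    have hg₂sm : ContDiff ℝ 2 g₂ :=
      contDiff_const.add (contDiff_const.mul ((contDiff_quadr d (a i)).of_le le_top))
    rw [hev.iteratedFDerivWithin_eq (heq _ haU) 2,
      iteratedFDerivWithin_cube_eq hg₂sm (hacube i), second_deriv_quadr]
    obtain ⟨j, hj⟩ := Function.ne_iff.mp hv
    apply Finset.sum_pos'
    · intro k _
      exact mul_nonneg (by positivity) (mul_self_nonneg _)
    · refine ⟨j, Finset.mem_univ j, ?_⟩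
      exact mul_pos (by positivity) (mul_self_pos.mpr hj)
  -- the smooth outer function
  obtain ⟨F₀, hF₀sm, hF₀a⟩ := smooth_approx D Ft₀ hFt₀ (show (0:ℝ) < ε/4 by positivity)
  refine ⟨f, a, F₀, fun i => (hfsm i).contDiffOn, hf01, hacube, hfmin, hfuniq, hainj,
    hhess, (hF₀sm.of_le le_top).contDiffOn, ?_⟩
  intro X hX
  have hXt : ∀ t, X t ∈ cube d := hX
  set mv : Fin D → ℝ := fun i => (S i).inf' (hS i) (fun t => f i (X t)) with hmvdef
  set mtv : Fin D → ℝ := fun i => (S i).inf' (hS i) (fun t => ft i (X t)) with hmtvdef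
  have hmv : mv ∈ cube D := by
    intro i
    constructor
    · exact Finset.le_inf' (hS i) _ (fun t _ => (hf01 i (X t) (hXt t)).1)
    · obtain ⟨t₀, ht₀, he⟩ := (S i).exists_mem_eq_inf' (hS i) (fun t => f i (X t))
      rw [hmvdef]
      simp only []
      rw [he]
      exact (hf01 i (X t₀) (hXt t₀)).2
  have hmtv : mtv ∈ cube D := by
    intro i
    constructor
    · exact Finset.le_inf' (hS i) _ (fun t _ => (hft01 i (X t) (hXt t)).1)
    · obtain ⟨t₀, ht₀, he⟩ := (S i).exists_mem_eq_inf' (hS i) (fun t => ft i (X t))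
      rw [hmtvdef]
      simp only []
      rw [he]
      exact (hft01 i (X t₀) (hXt t₀)).2
  have hdistc : dist mv mtv < δ₀ := by
    rw [dist_pi_lt_iff hδ₀pos]
    intro i
    rw [Real.dist_eq]
    calc |mv i - mtv i| ≤ 11*δ :=
          inf'_abs_le (S i) (hS i) _ _ (fun t _ => hfft i (X t) (hXt t))
      _ < δ₀ := hδδ₀
  have h1 : dist (Ft₀ mv) (Ft₀ mtv) < ε/2 := hδ₀ mv hmv mtv hmtv hdistc
  rw [Real.dist_eq] at h1
  rw [hHt X hX]
  calc |F₀ mv - Ft₀ mtv| ≤ |F₀ mv - Ft₀ mv| + |Ft₀ mv - Ft₀ mtv| := abs_sub_le _ _ _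
    _ ≤ ε/4 + ε/2 := add_le_add (hF₀a mv hmv) (le_of_lt h1)
    _ ≤ ε := by linarith
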